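/- Let Ω ⊂ ℝ² be a nonempty compact convex set and fix m ≥ 1. For an m-tuple p = (p₁, …, p_m) of pairwise distinct points of Ω, let V_i(p) = {q ∈ Ω : ‖q − p_i‖ ≤ ‖q − p_j‖ for all j} denote the Voronoi cell of p_i in Ω. If p⁽ⁿ⁾ = (p₁⁽ⁿ⁾, …, p_m⁽ⁿ⁾) is a sequence of m-tuples of points of Ω converging to a tuple p̂ = (p̂₁, …, p̂_m) of pairwise distinct points of Ω, then for each i the Voronoi cells V_i(p⁽ⁿ⁾) converge to V_i(p̂) in the Hausdorff distance. -/

import Mathlib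

open Filter

open scoped RealInnerProductSpace in
lemma voronoi_aux_affine (a b q r : EuclideanSpace ℝ (Fin 2)) (t : ℝ) :
    ‖((1 - t) • q + t • r) - a‖ ^ 2 - ‖((1 - t) • q + t • r) - b‖ ^ 2
      = (1 - t) * (‖q - a‖ ^ 2 - ‖q - b‖ ^ 2) + t * (‖r - a‖ ^ 2 - ‖r - b‖ ^ 2) := by
  have h : ∀ x : EuclideanSpace ℝ (Fin 2), ‖x - a‖^2 - ‖x - b‖^2
      = 2*⟪x,b⟫ - 2*⟪x,a⟫ + (‖a‖^2 - ‖b‖^2) := by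
    intro x; rw [norm_sub_sq_real, norm_sub_sq_real]; ring
  rw [h, h, h]
  simp only [inner_add_left, real_inner_smul_left]
  ring

lemma voronoi_aux_sq_le (a b : ℝ) (ha : 0 ≤ a) (hb : 0 ≤ b) (h : a^2 ≤ b^2) : a ≤ b := by
  nlinarith

set_option maxHeartbeats 1000000 in
/-- Let `Ω ⊂ ℝ²` be a nonempty compact convex set. For an `m`-tuple `p` of
pairwise distinct points of `Ω`, let `V i p = {q ∈ Ω : ∀ j, ‖q - p i‖ ≤ ‖q - p j‖}` be the
Voronoi cell of `p i` in `Ω`. If a sequence `p n` of such tuples converges (componentwise) to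
a tuple `phat` of pairwise distinct points of `Ω`, then for each `i` the Voronoi cells
`V i (p n)` converge to `V i phat` in the Hausdorff distance. -/
theorem voronoi_cells_hausdorff_convergence
    (Ω : Set (EuclideanSpace ℝ (Fin 2))) (hne : Ω.Nonempty) (hcomp : IsCompact Ω)
    (hconv : Convex ℝ Ω)
    (m : ℕ) (hm : 1 ≤ m)
    (p : ℕ → Fin m → EuclideanSpace ℝ (Fin 2)) (phat : Fin m → EuclideanSpace ℝ (Fin 2))
    (hpΩ : ∀ n i, p n i ∈ Ω) (hpinj : ∀ n, Function.Injective (p n))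
    (hphatΩ : ∀ i, phat i ∈ Ω) (hphatinj : Function.Injective phat)
    (hconvg : ∀ i, Tendsto (fun n => p n i) atTop (nhds (phat i))) :
    ∀ i, Tendsto
      (fun n => Metric.hausdorffDist
        {q ∈ Ω | ∀ j, ‖q - p n i‖ ≤ ‖q - p n j‖}
        {q ∈ Ω | ∀ j, ‖q - phat i‖ ≤ ‖q - phat j‖})
      atTop (nhds 0) := by
  intro i
  obtain ⟨C, hC⟩ := Metric.isBounded_iff.1 hcomp.isBounded
  obtain ⟨D, hD1, hdist⟩ : ∃ D : ℝ, 1 ≤ D ∧ ∀ x ∈ Ω, ∀ y ∈ Ω, ‖x - y‖ ≤ D := by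
    refine ⟨max C 1, le_max_right _ _, fun x hx y hy => ?_⟩
    rw [← dist_eq_norm]
    exact (hC hx hy).trans (le_max_left _ _)
  have hD0 : (0:ℝ) < D := lt_of_lt_of_le one_pos hD1
  by_cases hsing : ∀ j : Fin m, j = i
  · -- degenerate case: only one index, both cells are `Ω`
    have hs : ∀ (f : Fin m → EuclideanSpace ℝ (Fin 2)),
        {q ∈ Ω | ∀ j, ‖q - f i‖ ≤ ‖q - f j‖} = Ω := by
      intro f
      apply Set.ext
      intro q
      exact ⟨fun h => h.1, fun h => ⟨h, fun j => by rw [hsing j]⟩⟩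
    have heq : (fun n => Metric.hausdorffDist
        {q ∈ Ω | ∀ j, ‖q - p n i‖ ≤ ‖q - p n j‖}
        {q ∈ Ω | ∀ j, ‖q - phat i‖ ≤ ‖q - phat j‖}) = fun _ => (0:ℝ) := by
      funext n
      rw [hs (p n), hs phat, Metric.hausdorffDist_self_zero]
    rw [heq]
    exact tendsto_const_nhds
  · push_neg at hsing
    obtain ⟨j₀, hj₀⟩ := hsing
    have hne' : (Finset.univ.erase i).Nonempty :=
      ⟨j₀, Finset.mem_erase.2 ⟨hj₀, Finset.mem_univ _⟩⟩
    obtain ⟨c, hc0, hcle⟩ : ∃ c : ℝ, 0 < c ∧ ∀ j : Fin m, j ≠ i → c ≤ ‖phat i - phat j‖^2 := by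
      refine ⟨(Finset.univ.erase i).inf' hne' (fun j => ‖phat i - phat j‖^2), ?_, ?_⟩
      · rw [Finset.lt_inf'_iff]
        intro j hj
        have hij : phat i ≠ phat j :=
          hphatinj.ne (Ne.symm (Finset.mem_erase.1 hj).1)
        have h0 : (0:ℝ) < ‖phat i - phat j‖ := by
          rw [norm_pos_iff]
          exact sub_ne_zero.2 hij
        positivity
      · intro j hj
        exact Finset.inf'_le _ (Finset.mem_erase.2 ⟨hj, Finset.mem_univ _⟩)
    rw [Metric.tendsto_atTop]
    intro ε hε
    -- choose constants
    obtain ⟨t₀, ht₀0, ht₀1, ht₀ε⟩ : ∃ t₀ : ℝ, 0 < t₀ ∧ t₀ ≤ 1 ∧ t₀ * D ≤ ε/2 := by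
      refine ⟨min 1 (ε / (2*D)), lt_min one_pos (by positivity), min_le_left _ _, ?_⟩
      have h5 : min 1 (ε / (2*D)) ≤ ε/(2*D) := min_le_right _ _
      rw [← le_div_iff₀ hD0]
      calc min 1 (ε / (2*D)) ≤ ε/(2*D) := h5
        _ = ε/2/D := by ring
    obtain ⟨η, hη0, hη1, hη2, hη3⟩ : ∃ η : ℝ, 0 < η ∧ η ≤ 1 ∧
        η * (8*(D+1)*D) ≤ ε*c ∧ 4*η*D ≤ t₀*c := by
      have hden : (0:ℝ) < 8*(D+1)*D := by nlinarith
      refine ⟨min (min 1 (ε*c/(8*(D+1)*D))) (t₀*c/(4*D)), ?_, ?_, ?_, ?_⟩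
      · exact lt_min (lt_min one_pos (div_pos (mul_pos hε hc0) hden))
          (div_pos (mul_pos ht₀0 hc0) (by nlinarith))
      · exact le_trans (min_le_left _ _) (min_le_left _ _)
      · rw [← le_div_iff₀ hden]
        exact le_trans (min_le_left _ _) (min_le_right _ _)
      · have h4D : (0:ℝ) < 4*D := by nlinarith
        have := min_le_right (min 1 (ε*c/(8*(D+1)*D))) (t₀*c/(4*D))
        calc 4 * min (min 1 (ε*c/(8*(D+1)*D))) (t₀*c/(4*D)) * D
            ≤ 4 * (t₀*c/(4*D)) * D := by
              have h0 : (0:ℝ) ≤ 4*D := by linarith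
              nlinarith [this]
          _ = t₀ * c := by field_simp
    -- eventual closeness
    have hev : ∀ᶠ n in atTop, ∀ j, ‖p n j - phat j‖ < η := by
      rw [eventually_all]
      intro j
      have := (hconvg j).eventually (Metric.ball_mem_nhds (phat j) hη0)
      refine this.mono fun n hn => ?_
      rw [← dist_eq_norm]
      exact hn
    obtain ⟨N, hN⟩ := eventually_atTop.1 hev
    refine ⟨N, fun n hn => ?_⟩
    have hclose : ∀ j, ‖p n j - phat j‖ ≤ η := fun j => (hN n hn j).le
    have hmain : Metric.hausdorffDist
        {q ∈ Ω | ∀ j, ‖q - p n i‖ ≤ ‖q - p n j‖}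
        {q ∈ Ω | ∀ j, ‖q - phat i‖ ≤ ‖q - phat j‖} ≤ ε/2 := by
      apply Metric.hausdorffDist_le_of_infDist (by positivity)
      · -- every point of the perturbed cell is close to the limit cell
        rintro q ⟨hqΩ, hq⟩
        obtain ⟨t, ht0, ht1, htc, htX⟩ : ∃ t : ℝ, 0 ≤ t ∧ t ≤ 1 ∧
            t * (4*η*(D+1) + c) = 4*η*(D+1) ∧ (1-t) * (4*η*(D+1)) ≤ t * c := by
          have hden : 0 < 4*η*(D+1) + c := by nlinarith
          refine ⟨4*η*(D+1) / (4*η*(D+1) + c), by positivity, ?_, ?_, ?_⟩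
          · rw [div_le_one hden]; nlinarith
          · exact div_mul_cancel₀ _ hden.ne'
          · have h1 : (4*η*(D+1) / (4*η*(D+1) + c)) * (4*η*(D+1) + c) = 4*η*(D+1) :=
              div_mul_cancel₀ _ hden.ne'
            nlinarith [h1]
        set q' : EuclideanSpace ℝ (Fin 2) := (1 - t) • q + t • phat i with hq'
        have hq'Ω : q' ∈ Ω := hconv hqΩ (hphatΩ i) (by linarith) ht0 (by ring)
        have hq'B : q' ∈ {q ∈ Ω | ∀ j, ‖q - phat i‖ ≤ ‖q - phat j‖} := by
          refine ⟨hq'Ω, fun j => ?_⟩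
          by_cases hji : j = i
          · rw [hji]
          · have key := voronoi_aux_affine (phat i) (phat j) q (phat i) t
            have hfq : ‖q - phat i‖^2 - ‖q - phat j‖^2 ≤ 4*η*(D+1) := by
              have h1 : ‖q - phat i‖ ≤ ‖q - p n i‖ + ‖p n i - phat i‖ := by
                have := norm_add_le (q - p n i) (p n i - phat i)
                simpa using this
              have h2 : ‖q - p n j‖ ≤ ‖q - phat j‖ + ‖phat j - p n j‖ := by
                have := norm_add_le (q - phat j) (phat j - p n j)
                simpa using this
              have h4 : ‖q - phat i‖ ≤ ‖q - phat j‖ + 2*η := by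
                have hqj := hq j
                have hci := hclose i
                have hcj := hclose j
                rw [norm_sub_rev (p n j) (phat j)] at hcj
                linarith
              have hb : ‖q - phat j‖ ≤ D := hdist _ hqΩ _ (hphatΩ j)
              have hsq2 : ‖q - phat i‖^2 ≤ (‖q - phat j‖ + 2*η)^2 :=
                pow_le_pow_left₀ (norm_nonneg _) h4 2
              have hexp : (‖q - phat j‖ + 2*η)^2
                  = ‖q - phat j‖^2 + 4*(η*‖q - phat j‖) + 4*(η*η) := by ring
              have hm1 : η*‖q - phat j‖ ≤ η*D :=
                mul_le_mul_of_nonneg_left hb hη0.le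
              have hm2 : η*η ≤ η*1 := mul_le_mul_of_nonneg_left hη1 hη0.le
              nlinarith
            have hfp : ‖phat i - phat i‖^2 - ‖phat i - phat j‖^2 ≤ -c := by
              have := hcle j hji
              simp only [sub_self, norm_zero]
              nlinarith
            have hsq : ‖q' - phat i‖^2 - ‖q' - phat j‖^2 ≤ 0 := by
              rw [hq', key]
              have e1 : (1-t) * (‖q - phat i‖^2 - ‖q - phat j‖^2) ≤ (1-t) * (4*η*(D+1)) :=
                mul_le_mul_of_nonneg_left hfq (by linarith)
              have e2 : t * (‖phat i - phat i‖^2 - ‖phat i - phat j‖^2) ≤ t * (-c) :=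
                mul_le_mul_of_nonneg_left hfp ht0
              have e3 : t * (-c) = -(t*c) := by ring
              linarith
            exact voronoi_aux_sq_le _ _ (norm_nonneg _) (norm_nonneg _) (by linarith)
        have hd : dist q q' ≤ t * D := by
          rw [dist_eq_norm]
          have he : q - q' = t • (q - phat i) := by rw [hq']; module
          rw [he, norm_smul, Real.norm_eq_abs, abs_of_nonneg ht0]
          exact mul_le_mul_of_nonneg_left (hdist _ hqΩ _ (hphatΩ i)) ht0
        have htD : t * D ≤ ε/2 := by
          have h5 : t * c ≤ 4*η*(D+1) := by
            nlinarith [htc, mul_nonneg ht0 (show (0:ℝ) ≤ 4*η*(D+1) by positivity)]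
          have h7 : t * c * D ≤ 4*η*(D+1) * D :=
            mul_le_mul_of_nonneg_right h5 hD0.le
          nlinarith [hη2, hc0, hD0]
        calc Metric.infDist q {q ∈ Ω | ∀ j, ‖q - phat i‖ ≤ ‖q - phat j‖}
            ≤ dist q q' := Metric.infDist_le_dist_of_mem hq'B
          _ ≤ t * D := hd
          _ ≤ ε/2 := htD
      · -- every point of the limit cell is close to the perturbed cell
        rintro q ⟨hqΩ, hq⟩
        set q' : EuclideanSpace ℝ (Fin 2) := (1 - t₀) • q + t₀ • phat i with hq'
        have hq'Ω : q' ∈ Ω := hconv hqΩ (hphatΩ i) (by linarith) ht₀0.le (by ring)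
        have hq'A : q' ∈ {q ∈ Ω | ∀ j, ‖q - p n i‖ ≤ ‖q - p n j‖} := by
          refine ⟨hq'Ω, fun j => ?_⟩
          by_cases hji : j = i
          · rw [hji]
          · have key := voronoi_aux_affine (phat i) (phat j) q (phat i) t₀
            have hfq : ‖q - phat i‖^2 - ‖q - phat j‖^2 ≤ 0 := by
              have := pow_le_pow_left₀ (norm_nonneg _) (hq j) 2
              linarith
            have hfp : ‖phat i - phat i‖^2 - ‖phat i - phat j‖^2 ≤ -c := by
              have := hcle j hji
              simp only [sub_self, norm_zero]
              nlinarith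
            have hsq : ‖q' - phat i‖^2 ≤ ‖q' - phat j‖^2 - t₀ * c := by
              rw [hq']
              have e1 : (1-t₀) * (‖q - phat i‖^2 - ‖q - phat j‖^2) ≤ 0 :=
                mul_nonpos_of_nonneg_of_nonpos (by linarith) hfq
              have e2 : t₀ * (‖phat i - phat i‖^2 - ‖phat i - phat j‖^2) ≤ t₀ * (-c) :=
                mul_le_mul_of_nonneg_left hfp ht₀0.le
              have e3 : t₀ * (-c) = -(t₀*c) := by ring
              linarith [key]
            have ha : ‖q' - phat i‖ ≤ D := hdist _ hq'Ω _ (hphatΩ i)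
            have hb : ‖q' - phat j‖ ≤ D := hdist _ hq'Ω _ (hphatΩ j)
            have hbpos : 0 < ‖q' - phat j‖ := by
              nlinarith [mul_pos ht₀0 hc0, sq_nonneg (‖q' - phat i‖), norm_nonneg (q' - phat j)]
            have hgap : ‖q' - phat i‖ + 2*η ≤ ‖q' - phat j‖ := by
              nlinarith [norm_nonneg (q' - phat i), norm_nonneg (q' - phat j),
                mul_pos ht₀0 hc0, hη0.le,
                mul_le_mul_of_nonneg_left (add_le_add ha hb) hη0.le]
            have h1 : ‖q' - p n i‖ ≤ ‖q' - phat i‖ + ‖phat i - p n i‖ := by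
              have := norm_add_le (q' - phat i) (phat i - p n i)
              simpa using this
            have h2 : ‖q' - phat j‖ ≤ ‖q' - p n j‖ + ‖p n j - phat j‖ := by
              have := norm_add_le (q' - p n j) (p n j - phat j)
              simpa using this
            have hci := hclose i
            have hcj := hclose j
            rw [norm_sub_rev (phat i) (p n i)] at h1
            linarith
        have hd : dist q q' ≤ t₀ * D := by
          rw [dist_eq_norm]
          have he : q - q' = t₀ • (q - phat i) := by rw [hq']; module
          rw [he, norm_smul, Real.norm_eq_abs, abs_of_nonneg ht₀0.le]
          exact mul_le_mul_of_nonneg_left (hdist _ hqΩ _ (hphatΩ i)) ht₀0.le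
        calc Metric.infDist q {q ∈ Ω | ∀ j, ‖q - p n i‖ ≤ ‖q - p n j‖}
            ≤ dist q q' := Metric.infDist_le_dist_of_mem hq'A
          _ ≤ t₀ * D := hd
          _ ≤ ε/2 := ht₀ε
    rw [Real.dist_eq, sub_zero, abs_of_nonneg Metric.hausdorffDist_nonneg]
    linarith
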